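/- Let q be a prime power, V a 2n-dimensional vector space over 𝔽_q equipped with a nondegenerate alternating bilinear form, and L ⊆ V a fixed Lagrangian subspace. Then the number of Lagrangian subspaces I of V with I ∩ L = 0 equals q^{n(n+1)/2}. -/

import Mathlib

open Matrix Module LinearMap

private lemma pairs_card (m : ℕ) : Fintype.card {p : Fin m × Fin m // p.1 ≤ p.2} = m * (m+1) / 2 := by
  have e : {p : Fin m × Fin m // p.1 ≤ p.2} ≃ Σ j : Fin m, Fin (j+1) :=
    { toFun := fun p => ⟨p.1.2, ⟨p.1.1, Nat.lt_succ_of_le p.2⟩⟩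
      invFun := fun x => ⟨(⟨x.2, lt_of_lt_of_le x.2.2 x.1.2⟩, x.1), Nat.le_of_lt_succ x.2.2⟩
      left_inv := fun p => by ext <;> rfl
      right_inv := fun x => by rfl }
  rw [Fintype.card_congr e, Fintype.card_sigma]
  have h1 : ∑ j : Fin m, Fintype.card (Fin (j+1)) = ∑ i ∈ Finset.range m, (i+1) := by
    simp only [Fintype.card_fin]
    exact Fin.sum_univ_eq_sum_range (fun i => i + 1) m
  have h2 : (∑ i ∈ Finset.range (m+1), i) * 2 = (m+1) * m := by
    simpa using Finset.sum_range_id_mul_two (m+1)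
  have h3 : ∑ i ∈ Finset.range (m+1), i = ∑ i ∈ Finset.range m, (i+1) := by
    rw [Finset.sum_range_succ' (fun i => i) m]
    simp [Finset.sum_add_distrib]
  rw [h1, ← h3]
  have h4 : m * (m+1) = (m+1) * m := Nat.mul_comm _ _
  omega

private lemma symm_matrix_card (F : Type*) [Fintype F] [DecidableEq F] (m : ℕ) :
    Nat.card {M : Matrix (Fin m) (Fin m) F // M.IsSymm} = Fintype.card F ^ (m * (m+1) / 2) := by
  have e : {M : Matrix (Fin m) (Fin m) F // M.IsSymm} ≃ ({p : Fin m × Fin m // p.1 ≤ p.2} → F) :=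
    { toFun := fun M p => M.1 p.1.1 p.1.2
      invFun := fun f =>
        ⟨Matrix.of fun i j => if h : i ≤ j then f ⟨(i,j), h⟩ else f ⟨(j,i), le_of_not_ge h⟩, by
          ext i j
          simp only [Matrix.transpose_apply, Matrix.of_apply]
          rcases le_or_gt i j with h | h
          · rcases eq_or_lt_of_le h with rfl | h'
            · rfl
            · rw [dif_neg (not_le.2 h'), dif_pos h]
          · rw [dif_pos h.le, dif_neg (not_le.2 h)]⟩
      left_inv := fun M => by
        ext i j
        simp only [Matrix.of_apply]
        rcases le_or_gt i j with h | h
        · rw [dif_pos h]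
        · rw [dif_neg (not_le.2 h)]
          exact congrFun (congrFun M.2 j) i |>.symm ▸ (M.2 ▸ rfl)
      right_inv := fun f => by
        ext p
        simp only [Matrix.of_apply, dif_pos p.2] }
  rw [Nat.card_congr e, Nat.card_eq_fintype_card, Fintype.card_fun, pairs_card]

private lemma exists_split {F W : Type*} [Field F] [AddCommGroup W] [Module F W]
    [FiniteDimensional F W] (β : W →ₗ[F] W →ₗ[F] F) (hβ : ∀ x, β x x = 0) :
    ∃ C : W →ₗ[F] W →ₗ[F] F, C - C.flip = β := by
  have hskew : ∀ x y, β x y = -β y x := fun x y => ((LinearMap.IsAlt.neg hβ y x)).symm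
  set m := Module.finrank F W with hm
  let b : Basis (Fin m) F W := Module.finBasis F W
  refine ⟨∑ p ∈ Finset.univ.filter (fun p : Fin m × Fin m => p.1 < p.2),
    (b.coord p.1).smulRight ((b.coord p.2).smulRight (β (b p.1) (b p.2))), ?_⟩
  apply b.ext; intro k
  apply b.ext; intro l
  have coordeval : ∀ (i k : Fin m), b.coord i (b k) = if i = k then 1 else 0 := by
    intro i k
    rw [Basis.coord_apply, Basis.repr_self, Finsupp.single_apply]
    simp [eq_comm]
  have key : ∀ k l, (∑ p ∈ Finset.univ.filter (fun p : Fin m × Fin m => p.1 < p.2),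
      (b.coord p.1).smulRight ((b.coord p.2).smulRight (β (b p.1) (b p.2)))) (b k) (b l)
      = if k < l then β (b k) (b l) else 0 := by
    intro k l
    rw [Finset.sum_filter, LinearMap.sum_apply, LinearMap.sum_apply]
    have term_eval : ∀ p : Fin m × Fin m,
        ((if p.1 < p.2 then
          (b.coord p.1).smulRight ((b.coord p.2).smulRight (β (b p.1) (b p.2)))
          else 0) (b k)) (b l)
        = if p = (k, l) then (if k < l then β (b k) (b l) else 0) else 0 := by
      intro p
      rcases eq_or_ne p (k, l) with rfl | hne
      · by_cases h : k < l <;>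
          simp [h, LinearMap.smulRight_apply, coordeval]
      · have : p.1 ≠ k ∨ p.2 ≠ l := by
          by_contra hc
          push_neg at hc
          exact hne (Prod.ext hc.1 hc.2)
        by_cases h : p.1 < p.2
        · rcases this with h1 | h2
          · simp [h, LinearMap.smulRight_apply, coordeval, h1, hne]
          · by_cases h1 : p.1 = k
            · obtain ⟨p1, p2⟩ := p
              subst h1
              simp only at h h2 ⊢
              simp [h, h2, LinearMap.smulRight_apply, coordeval, hne]
            · simp [h, h1, hne, LinearMap.smulRight_apply, coordeval]
        · simp [h, hne]
    simp only [term_eval]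
    rw [Finset.sum_ite_eq' Finset.univ (k, l)]
    simp
  simp only [LinearMap.sub_apply, LinearMap.flip_apply, key]
  rcases lt_trichotomy k l with h | h | h
  · simp [h, not_lt.2 h.le]
  · subst h; simp [hβ]
  · simp [not_lt.2 h.le, h, hskew (b k) (b l)]

private lemma bilin_count {F W : Type*} [Field F] [Fintype F] [AddCommGroup W] [Module F W]
    [FiniteDimensional F W] (γ : W →ₗ[F] W →ₗ[F] F) (hγ : ∀ x, γ x x = 0) :
    Nat.card {C : W →ₗ[F] W →ₗ[F] F // C - C.flip = γ}
      = Fintype.card F ^ (Module.finrank F W * (Module.finrank F W + 1) / 2) := by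
  classical
  obtain ⟨C₀, hC₀⟩ := exists_split γ hγ
  have hfsub : ∀ A B : W →ₗ[F] W →ₗ[F] F, (A - B).flip = A.flip - B.flip := by
    intro A B; ext x y; simp
  have hfadd : ∀ A B : W →ₗ[F] W →ₗ[F] F, (A + B).flip = A.flip + B.flip := by
    intro A B; ext x y; simp
  have e1 : {C : W →ₗ[F] W →ₗ[F] F // C - C.flip = γ}
      ≃ {S : W →ₗ[F] W →ₗ[F] F // S.flip = S} :=
    { toFun := fun C => ⟨C.1 - C₀, by
        have h := C.2
        have : (C.1 - C₀) - (C.1 - C₀).flip = 0 := by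
          calc _ = (C.1 - C.1.flip) - (C₀ - C₀.flip) := by rw [hfsub]; abel
            _ = 0 := by rw [h, hC₀]; exact sub_self γ
        exact (sub_eq_zero.mp this).symm⟩
      invFun := fun S => ⟨S.1 + C₀, by
        have h : S.1.flip = S.1 := S.2
        rw [hfadd, h, ← hC₀]; abel⟩
      left_inv := fun C => by ext : 1; exact sub_add_cancel C.1 C₀
      right_inv := fun S => by ext : 1; exact add_sub_cancel_right S.1 C₀ }
  rw [Nat.card_congr e1]
  set m := Module.finrank F W with hm
  let b : Basis (Fin m) F W := Module.finBasis F W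
  let E : (W →ₗ[F] W →ₗ[F] F) ≃ₗ[F] Matrix (Fin m) (Fin m) F := LinearMap.toMatrix₂ b b
  have hflip : ∀ S : W →ₗ[F] W →ₗ[F] F, (E S)ᵀ = E S.flip := by
    intro S
    ext i j
    simp [E, Matrix.transpose_apply, LinearMap.toMatrix₂_apply]
  have e2 : {S : W →ₗ[F] W →ₗ[F] F // S.flip = S} ≃ {M : Matrix (Fin m) (Fin m) F // M.IsSymm} :=
    (Equiv.subtypeEquiv E.toEquiv (by
      intro S
      constructor
      · intro h
        show (E S)ᵀ = E S
        rw [hflip, h]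
      · intro h
        have : E S.flip = E S := by rw [← hflip]; exact h
        exact E.injective this))
  rw [Nat.card_congr e2, symm_matrix_card]

/-- Let `F = 𝔽_q` be a finite field (`q = Fintype.card F` a prime power), `V` a
`2n`-dimensional `F`-vector space with a nondegenerate alternating bilinear form `B`,
and `L ⊆ V` a Lagrangian (`L = L^⊥`, expressed pointwise: `v ∈ L ↔ ∀ w ∈ L, B v w = 0`).
Then the number of Lagrangians `I` with `I ∩ L = 0` equals `q^{n(n+1)/2}`. -/
theorem stmt8 {F V : Type*} [Field F] [Fintype F] [AddCommGroup V] [Module F V]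
    [FiniteDimensional F V] (n : ℕ) (hdim : Module.finrank F V = 2 * n)
    (B : V →ₗ[F] V →ₗ[F] F)
    (halt : ∀ v, B v v = 0)
    (hnd : ∀ v, (∀ w, B v w = 0) → v = 0)
    (L : Submodule F V) (hL : ∀ v, v ∈ L ↔ ∀ w ∈ L, B v w = 0) :
    Nat.card {I : Submodule F V // (∀ v, v ∈ I ↔ ∀ w ∈ I, B v w = 0) ∧ I ⊓ L = ⊥}
      = Fintype.card F ^ (n * (n + 1) / 2) := by
  classical
  have halt' : LinearMap.IsAlt B := halt
  have hrefl : LinearMap.IsRefl B := halt'.isRefl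
  have hnd' : LinearMap.BilinForm.Nondegenerate B := hrefl.nondegenerate_iff_separatingLeft.mpr hnd
  have hskew : ∀ x y : V, B x y = -B y x := fun x y => (halt'.neg y x).symm
  have hLL : ∀ a ∈ L, ∀ c ∈ L, B a c = 0 := fun a ha c hc => (hL a).mp ha c hc
  have horth : ∀ (I : Submodule F V) (v : V),
      v ∈ LinearMap.BilinForm.orthogonal B I ↔ ∀ w ∈ I, B v w = 0 := by
    intro I v
    rw [LinearMap.BilinForm.mem_orthogonal_iff]
    constructor
    · intro h w hw
      rw [hskew v w, h w hw, neg_zero]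
    · intro h w hw
      show B w v = 0
      rw [hskew w v, h w hw, neg_zero]
  have lag_dim : ∀ I : Submodule F V, (∀ v, v ∈ I ↔ ∀ w ∈ I, B v w = 0) →
      Module.finrank F I = n := by
    intro I hI
    have hIeq : I = LinearMap.BilinForm.orthogonal B I := by
      ext v; rw [hI v, horth]
    have hfr := LinearMap.BilinForm.finrank_orthogonal hnd' I
    rw [← hIeq, hdim] at hfr
    have hle : Module.finrank F I ≤ 2 * n := hdim ▸ Submodule.finrank_le I
    omega
  have hdimL : Module.finrank F L = n := lag_dim L hL
  obtain ⟨W, hW⟩ := Submodule.exists_isCompl L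
  have hdimW : Module.finrank F W = n := by
    have := Submodule.finrank_add_eq_of_isCompl hW
    rw [hdim, hdimL] at this; omega
  have hdisj : ∀ v : V, v ∈ W → v ∈ L → v = 0 := fun v hvW hvL =>
    (Submodule.disjoint_def.mp hW.disjoint) v hvL hvW
  -- the graph construction
  set g : (W →ₗ[F] L) → (W →ₗ[F] V) := fun φ => W.subtype + L.subtype ∘ₗ φ with hg
  have g_apply : ∀ (φ : W →ₗ[F] L) (x : W), g φ x = (x : V) + (φ x : V) := by
    intro φ x; simp [hg]
  have g_inj : ∀ φ : W →ₗ[F] L, Function.Injective (g φ) := by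
    intro φ x y hxy
    rw [g_apply, g_apply] at hxy
    have h1 : (x : V) - (y : V) = (φ y : V) - (φ x : V) := by
      rw [sub_eq_sub_iff_add_eq_add, hxy]
      exact add_comm _ _
    have h2 : (x - y : W) = (0 : W) := by
      have hmem : ((x - y : W) : V) ∈ L := by
        rw [Submodule.coe_sub, h1]
        exact sub_mem (φ y).2 (φ x).2
      have := hdisj ((x - y : W) : V) (x - y).2 hmem
      exact Subtype.ext this
    exact sub_eq_zero.mp h2
  have g_dim : ∀ φ : W →ₗ[F] L, Module.finrank F (LinearMap.range (g φ)) = n := by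
    intro φ
    rw [LinearMap.finrank_range_of_inj (g_inj φ), hdimW]
  set Q : (W →ₗ[F] L) → Prop :=
    fun φ => ∀ x y : W, B x y + B x (φ y) + B (φ x) y = 0 with hQdef
  have g_iso : ∀ φ : W →ₗ[F] L, Q φ →
      ∀ v ∈ LinearMap.range (g φ), ∀ w ∈ LinearMap.range (g φ), B v w = 0 := by
    intro φ hφ v hv w hw
    obtain ⟨x, rfl⟩ := hv
    obtain ⟨y, rfl⟩ := hw
    rw [g_apply, g_apply]
    have hiso : B (φ x : V) (φ y : V) = 0 := hLL _ (φ x).2 _ (φ y).2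
    have := hφ x y
    simp only [map_add, LinearMap.add_apply]
    linear_combination this + hiso
  have g_lag : ∀ φ : W →ₗ[F] L, Q φ →
      ∀ v, v ∈ LinearMap.range (g φ) ↔ ∀ w ∈ LinearMap.range (g φ), B v w = 0 := by
    intro φ hφ
    have hle : LinearMap.range (g φ) ≤ LinearMap.BilinForm.orthogonal B (LinearMap.range (g φ)) := by
      intro v hv
      rw [horth]
      exact g_iso φ hφ v hv
    have heq := Submodule.eq_of_le_of_finrank_le hle (by
      rw [LinearMap.BilinForm.finrank_orthogonal hnd', g_dim φ, hdim]
      omega)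
    intro v
    constructor
    · intro hv
      exact g_iso φ hφ v hv
    · intro hv
      rw [heq, horth]
      exact hv
  have g_inf : ∀ φ : W →ₗ[F] L, LinearMap.range (g φ) ⊓ L = ⊥ := by
    intro φ
    rw [eq_bot_iff]
    rintro v ⟨hv1, hv2⟩
    obtain ⟨x, rfl⟩ := hv1
    rw [g_apply] at hv2 ⊢
    have hxL : (x : V) ∈ L := by
      rw [← add_sub_cancel_right (x : V) (φ x : V)]
      exact sub_mem hv2 (φ x).2
    have hx0 : (x : V) = 0 := hdisj _ x.2 hxL
    have : x = 0 := Subtype.ext hx0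
    simp [this]
  -- the bijection
  set f : {φ : W →ₗ[F] L // Q φ} →
      {I : Submodule F V // (∀ v, v ∈ I ↔ ∀ w ∈ I, B v w = 0) ∧ I ⊓ L = ⊥} :=
    fun φ => ⟨LinearMap.range (g φ.1), g_lag φ.1 φ.2, g_inf φ.1⟩ with hf
  have f_inj : Function.Injective f := by
    rintro ⟨φ, hφ⟩ ⟨ψ, hψ⟩ h
    have hr : LinearMap.range (g φ) = LinearMap.range (g ψ) := congrArg Subtype.val h
    refine Subtype.ext (LinearMap.ext fun x => ?_)
    have : g φ x ∈ LinearMap.range (g ψ) := hr ▸ LinearMap.mem_range_self _ x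
    obtain ⟨y, hy⟩ := this
    rw [g_apply, g_apply] at hy
    have h1 : (y : V) - (x : V) = (φ x : V) - (ψ y : V) := by
      rw [sub_eq_sub_iff_add_eq_add, hy]
      exact add_comm _ _
    have h2 : y = x := by
      have hmem : ((y - x : W) : V) ∈ L := by
        rw [Submodule.coe_sub, h1]
        exact sub_mem (φ x).2 (ψ y).2
      have := hdisj ((y - x : W) : V) (y - x).2 hmem
      exact sub_eq_zero.mp (Subtype.ext this)
    subst h2
    exact Subtype.ext (add_left_cancel hy).symm
  have f_surj : Function.Surjective f := by
    rintro ⟨I, hI1, hI2⟩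
    have hdimI : Module.finrank F I = n := lag_dim I hI1
    have hcompl : IsCompl L I := by
      constructor
      · rw [disjoint_comm]
        exact disjoint_iff.mpr hI2
      · rw [codisjoint_iff]
        apply Submodule.eq_top_of_finrank_eq
        have hsum := Submodule.finrank_sup_add_finrank_inf_eq L I
        have hLI : L ⊓ I = ⊥ := by rw [inf_comm]; exact hI2
        rw [hLI, hdimL, hdimI] at hsum
        simp only [finrank_bot, add_zero] at hsum
        rw [hsum, hdim]; ring
    set π := Submodule.projectionOnto L I hcompl with hπ
    set φ : W →ₗ[F] L := -(π ∘ₗ W.subtype) with hφdef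
    have hφx : ∀ x : W, (φ x : V) = -(π (x : V) : V) := by
      intro x; simp [hφdef]
    have hmemI : ∀ x : W, g φ x ∈ I := by
      intro x
      rw [← Submodule.ker_projectionOnto hcompl (p := L) (q := I), LinearMap.mem_ker]
      rw [g_apply, map_add]
      have h1 : π ((φ x : V)) = φ x := Submodule.projectionOnto_apply_left hcompl (φ x)
      rw [h1, hφdef]
      simp [hπ]
    have hrange : LinearMap.range (g φ) = I := by
      apply Submodule.eq_of_le_of_finrank_le
      · rintro v ⟨x, rfl⟩
        exact hmemI x
      · rw [hdimI, g_dim φ]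
    have hQφ : Q φ := by
      intro x y
      have hx : g φ x ∈ I := hmemI x
      have hy : g φ y ∈ I := hmemI y
      have h0 : B (g φ x) (g φ y) = 0 := (hI1 _).mp hx _ hy
      rw [g_apply, g_apply] at h0
      simp only [map_add, LinearMap.add_apply] at h0
      have hiso : B (φ x : V) (φ y : V) = 0 := hLL _ (φ x).2 _ (φ y).2
      linear_combination h0 - hiso
    exact ⟨⟨φ, hQφ⟩, Subtype.ext hrange⟩
  rw [← Nat.card_congr (Equiv.ofBijective f ⟨f_inj, f_surj⟩)]
  -- reinterpret φ's as bilinear forms on W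
  set β : (W : Type _) →ₗ[F] (W : Type _) →ₗ[F] F := B.compl₁₂ W.subtype W.subtype with hβ
  set Φ : ((W : Type _) →ₗ[F] L) →ₗ[F] ((W : Type _) →ₗ[F] (W : Type _) →ₗ[F] F) :=
    { toFun := fun φ => B.compl₁₂ W.subtype (L.subtype ∘ₗ φ)
      map_add' := by
        intro φ ψ; ext x y; simp [LinearMap.compl₁₂_apply]
      map_smul' := by
        intro c φ; ext x y; simp [LinearMap.compl₁₂_apply] } with hΦ
  have Φ_apply : ∀ (φ : (W : Type _) →ₗ[F] L) (x y : W), Φ φ x y = B x (φ y) := by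
    intro φ x y; simp [hΦ, LinearMap.compl₁₂_apply]
  have β_apply : ∀ x y : W, β x y = B x y := by
    intro x y; simp [hβ, LinearMap.compl₁₂_apply]
  have Φ_inj : Function.Injective Φ := by
    rw [injective_iff_map_eq_zero]
    intro φ hφ
    have hφ0 : Φ φ = 0 := hφ
    have : φ = 0 := by
      apply LinearMap.ext
      intro y
      have hall : ∀ v : V, B v ((φ y : L) : V) = 0 := by
        intro v
        have hv : v ∈ L ⊔ W := by rw [hW.sup_eq_top]; trivial
        obtain ⟨a, ha, b, hb, rfl⟩ := Submodule.mem_sup.mp hv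
        rw [map_add, LinearMap.add_apply]
        have h1 : B a ((φ y : L) : V) = 0 := hLL a ha _ (φ y).2
        have h2 : B b ((φ y : L) : V) = 0 := by
          have h3 := LinearMap.ext_iff.mp (LinearMap.ext_iff.mp hφ0 ⟨b, hb⟩) y
          rw [Φ_apply] at h3
          exact h3
        rw [h1, h2, add_zero]
      have h0 : ((φ y : L) : V) = 0 := by
        apply hnd
        intro w
        rw [hskew, hall w, neg_zero]
      exact Subtype.ext h0
    simpa using this
  have hd1 : Module.finrank F ((W : Type _) →ₗ[F] L) = n * n := by
    rw [Module.finrank_linearMap, hdimW, hdimL]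
  have hd2 : Module.finrank F ((W : Type _) →ₗ[F] (W : Type _) →ₗ[F] F) = n * n := by
    rw [Module.finrank_linearMap, Module.finrank_linearMap, hdimW, Module.finrank_self, mul_one]
  set Φe := LinearEquiv.ofBijective Φ ⟨Φ_inj, (@LinearMap.injective_iff_surjective_of_finrank_eq_finrank F
    ((W : Type _) →ₗ[F] L) _ _ _ ((W : Type _) →ₗ[F] (W : Type _) →ₗ[F] F) _ _ _ _
    (by rw [hd1]; exact hd2.symm) Φ).mp Φ_inj⟩ with hΦe
  have Φe_apply : ∀ φ, Φe φ = Φ φ := fun φ =>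
    LinearEquiv.ofBijective_apply Φ φ
  have hQiff : ∀ φ : (W : Type _) →ₗ[F] L, Q φ ↔ Φ φ - (Φ φ).flip = -β := by
    intro φ
    constructor
    · intro h
      ext x y
      simp only [LinearMap.sub_apply, LinearMap.flip_apply, LinearMap.neg_apply,
        Φ_apply, β_apply]
      have hs := hskew ((φ x : L) : V) (y : V)
      linear_combination (h x y) - hs
    · intro h x y
      have h2 := LinearMap.ext_iff.mp (LinearMap.ext_iff.mp h x) y
      simp only [LinearMap.sub_apply, LinearMap.flip_apply, LinearMap.neg_apply,
        Φ_apply, β_apply] at h2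
      have hs := hskew ((φ x : L) : V) (y : V)
      linear_combination h2 + hs
  have e3 : {φ : (W : Type _) →ₗ[F] L // Q φ}
      ≃ {C : (W : Type _) →ₗ[F] (W : Type _) →ₗ[F] F // C - C.flip = -β} :=
    Equiv.subtypeEquiv Φe.toEquiv (fun φ => by
      rw [show Φe.toEquiv φ = Φ φ from Φe_apply φ]
      exact hQiff φ)
  rw [Nat.card_congr e3, bilin_count (-β) (by
    intro x
    simp only [LinearMap.neg_apply, β_apply]
    rw [halt, neg_zero]), hdimW]
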